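/- Let V be a finite-dimensional vector space over a field R, dim V ≥ 2, and 𝒳 ⊂ P(V) a finite subset with at least two elements such that every permutation of 𝒳 extends to an element of PGL(V). Then 𝒳 is an independent subset, or an m-simplex for some 2 ≤ m ≤ dim V, or R has characteristic 3 and 𝒳 is a harmonic subset. -/

import Mathlib

open Submodule Set

/-- A finite set of lines is *independent* if some choice of nonzero representative
vectors is linearly independent. -/
def IndepLines (K : Type*) {V : Type*} [DivisionRing K] [AddCommGroup V] [Module K V]
    (𝒳 : Set (Submodule K V)) : Prop :=
  ∃ x : 𝒳 → V, (∀ P : 𝒳, x P ∈ (P : Submodule K V) ∧ x P ≠ 0) ∧ LinearIndependent K x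

/-- An `(m+1)`-element subset of `P(V)` is an *`m`-simplex* if it is not independent
but every `m`-element subset of it is independent. -/
def IsSimplex (K : Type*) {V : Type*} [DivisionRing K] [AddCommGroup V] [Module K V]
    (m : ℕ) (𝒳 : Set (Submodule K V)) : Prop :=
  𝒳.Finite ∧ 𝒳.ncard = m + 1 ∧ (∀ P ∈ 𝒳, Module.finrank K P = 1) ∧
    ¬ IndepLines K 𝒳 ∧ ∀ 𝒴 ⊆ 𝒳, 𝒴.ncard = m → IndepLines K 𝒴

/-- A subset of `P(V)` is *harmonic* if it is `{⟨x⟩, ⟨y⟩, ⟨x+y⟩, ⟨x−y⟩}` for some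
linearly independent `x, y`. -/
def Harmonic (K : Type*) {V : Type*} [DivisionRing K] [AddCommGroup V] [Module K V]
    (𝒳 : Set (Submodule K V)) : Prop :=
  ∃ x y : V, LinearIndependent K ![x, y] ∧
    𝒳 = {Submodule.span K {x}, Submodule.span K {y},
      Submodule.span K {x + y}, Submodule.span K {x - y}}

section Aux

variable {K V : Type*} [Field K] [AddCommGroup V] [Module K V]

/-- A 1-dimensional submodule is spanned by a nonzero vector. -/
lemma line_gen (P : Submodule K V) (h : Module.finrank K P = 1) :
    ∃ v : V, v ≠ 0 ∧ P = span K {v} := by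
  rw [finrank_eq_one_iff'] at h
  obtain ⟨v, hv0, hv⟩ := h
  refine ⟨v, by simpa using hv0, le_antisymm ?_ ?_⟩
  · intro w hw
    obtain ⟨c, hc⟩ := hv ⟨w, hw⟩
    exact mem_span_singleton.2 ⟨c, by simpa using congrArg Subtype.val hc⟩
  · rw [span_le, Set.singleton_subset_iff]; exact v.2

lemma span_eq_scalar {x y : V} (h : span K {x} = span K {y}) :
    ∃ c : K, c ≠ 0 ∧ x = c • y := by
  obtain ⟨z, hz⟩ := span_singleton_eq_span_singleton.1 h
  refine ⟨((z⁻¹ : Kˣ) : K), Units.ne_zero _, ?_⟩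
  rw [← hz]
  rw [← Units.smul_def, smul_smul]
  simp

lemma exists_perm_image {α : Type*} [Fintype α] (A B : Set α) (h : A.ncard = B.ncard) :
    ∃ s : Equiv.Perm α, ∀ a, (a ∈ A → s a ∈ B) ∧ (a ∉ A → s a ∉ B) := by
  classical
  have hcard : Fintype.card A = Fintype.card B := by
    rw [← Nat.card_eq_fintype_card, ← Nat.card_eq_fintype_card,
      Nat.card_coe_set_eq, Nat.card_coe_set_eq, h]
  have hcard' : Fintype.card {x // x ∉ A} = Fintype.card {x // x ∉ B} := by
    rw [Fintype.card_subtype_compl, Fintype.card_subtype_compl, hcard]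
  set e : {x // x ∈ A} ≃ {x // x ∈ B} := Fintype.equivOfCardEq hcard
  set f : {x // x ∉ A} ≃ {x // x ∉ B} := Fintype.equivOfCardEq hcard'
  refine ⟨Equiv.subtypeCongr e f, fun a => ⟨fun ha => ?_, fun ha => ?_⟩⟩
  · have : Equiv.subtypeCongr e f a = ↑(e ⟨a, ha⟩) := by
      simp [Equiv.subtypeCongr, ha]
    rw [this]; exact (e ⟨a, ha⟩).2
  · have : Equiv.subtypeCongr e f a = ↑(f ⟨a, ha⟩) := by
      simp [Equiv.subtypeCongr, ha]
    rw [this]; exact (f ⟨a, ha⟩).2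

lemma coords_eq {m : ℕ} {e : Fin m → V} (he : LinearIndependent K e) (x y : Fin m → K)
    (h : ∑ i, x i • e i = ∑ i, y i • e i) : x = y := by
  have h0 : ∑ i, (x - y) i • e i = 0 := by
    simp only [Pi.sub_apply, sub_smul, Finset.sum_sub_distrib, h, sub_self]
  have := Fintype.linearIndependent_iff.1 he (x - y) h0
  funext i
  simpa [sub_eq_zero] using this i

end Aux

section Aux2

variable {K V : Type*} [Field K] [AddCommGroup V] [Module K V]

lemma indepLines_iff_fam (𝒴 : Set (Submodule K V)) (w : Submodule K V → V)
    (hw : ∀ P ∈ 𝒴, w P ≠ 0 ∧ P = span K {w P}) :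
    IndepLines K 𝒴 ↔ LinearIndependent K (fun P : 𝒴 => w ↑P) := by
  constructor
  · rintro ⟨x, hx, hxli⟩
    have : ∀ P : 𝒴, ∃ γ : K, γ ≠ 0 ∧ x P = γ • w ↑P := by
      intro P
      obtain ⟨hP0, hPspan⟩ := hw ↑P P.2
      have := (hx P).1
      rw [hPspan, mem_span_singleton] at this
      obtain ⟨γ, hγ⟩ := this
      refine ⟨γ, ?_, hγ.symm⟩
      rintro rfl
      exact (hx P).2 (by simpa using hγ.symm)
    choose γ hγ0 hγ using this
    have hli2 := hxli.units_smul (fun P => (Units.mk0 (γ P) (hγ0 P))⁻¹)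
    convert hli2 using 1
    funext P
    rw [Pi.smul_apply', hγ P]
    rw [Units.smul_def, smul_smul]
    simp [hγ0 P]
  · intro hli
    refine ⟨fun P => w ↑P, fun P => ?_, hli⟩
    obtain ⟨hP0, hPspan⟩ := hw ↑P P.2
    exact ⟨by rw [hPspan]; exact mem_span_singleton_self _, hP0⟩

lemma indepLines_iff_set (𝒴 : Set (Submodule K V)) (w : Submodule K V → V)
    (hw : ∀ P ∈ 𝒴, w P ≠ 0 ∧ P = span K {w P}) :
    IndepLines K 𝒴 ↔ LinearIndependent K (fun v : (w '' 𝒴) => (v : V)) := by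
  rw [indepLines_iff_fam 𝒴 w hw]
  have hinj : Set.InjOn w 𝒴 := by
    intro P hP Q hQ hPQ
    rw [(hw P hP).2, (hw Q hQ).2, hPQ]
  exact linearIndepOn_iff_image hinj

lemma indepLines_mono {𝒴 𝒵 : Set (Submodule K V)} (h : 𝒴 ⊆ 𝒵) (hz : IndepLines K 𝒵) :
    IndepLines K 𝒴 := by
  obtain ⟨x, hx, hxli⟩ := hz
  exact ⟨fun P => x (Set.inclusion h P), fun P => by simpa using hx (Set.inclusion h P),
    hxli.comp (Set.inclusion h) (Set.inclusion_injective h)⟩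

lemma indepLines_map (u : V ≃ₗ[K] V) {𝒴 : Set (Submodule K V)} (h : IndepLines K 𝒴) :
    IndepLines K ((fun P => Submodule.map (u : V →ₗ[K] V) P) '' 𝒴) := by
  obtain ⟨x, hx, hxli⟩ := h
  have hinj : Function.Injective (fun P : Submodule K V => Submodule.map (u : V →ₗ[K] V) P) :=
    Submodule.map_injective_of_injective u.injective
  set e := Equiv.Set.image _ 𝒴 hinj with he
  refine ⟨fun Q => u (x (e.symm Q)), fun Q => ?_, ?_⟩
  · constructor
    · have h1 : (Q : Submodule K V) = Submodule.map (u : V →ₗ[K] V) ↑(e.symm Q) := by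
        conv_lhs => rw [← e.apply_symm_apply Q]
        rfl
      rw [h1]
      exact Submodule.mem_map_of_mem (hx _).1
    · simp [LinearEquiv.map_eq_zero_iff, (hx _).2]
  · exact ((hxli.map' u.toLinearMap u.ker).comp _ e.symm.injective)

lemma indepLines_iff_fn (𝒴 : Set (Submodule K V)) (w : Submodule K V → V)
    (hw : ∀ P ∈ 𝒴, w P ≠ 0 ∧ P = span K {w P}) {k : ℕ} (f : Fin k → Submodule K V)
    (hfi : Function.Injective f) (hfr : Set.range f = 𝒴) :
    IndepLines K 𝒴 ↔ LinearIndependent K (fun i => w (f i)) := by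
  rw [indepLines_iff_fam 𝒴 w hw]
  refine (linearIndependent_equiv' ((Equiv.ofInjective f hfi).trans (Equiv.setCongr hfr)) ?_).symm
  funext i
  simp

end Aux2

set_option maxHeartbeats 1000000 in
/-- Theorem 2: If every permutation of a finite subset `𝒳` of `P(V)`
(`|𝒳| ≥ 2`) extends to an element of `PGL(V)`, then `𝒳` is independent, or an
`m`-simplex for some `2 ≤ m ≤ dim V`, or `char K = 3` and `𝒳` is harmonic. -/
theorem stmt9 {K V : Type*} [Field K] [AddCommGroup V] [Module K V]
    [FiniteDimensional K V] (hdim : 2 ≤ Module.finrank K V)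
    (𝒳 : Set (Submodule K V)) (hfin : 𝒳.Finite) (h2 : 2 ≤ 𝒳.ncard)
    (hline : ∀ P ∈ 𝒳, Module.finrank K P = 1)
    (hext : ∀ s : Equiv.Perm 𝒳, ∃ u : V ≃ₗ[K] V, ∀ P : 𝒳,
      Submodule.map (u : V →ₗ[K] V) (P : Submodule K V) = (s P : Submodule K V)) :
    IndepLines K 𝒳 ∨
      (∃ m : ℕ, 2 ≤ m ∧ m ≤ Module.finrank K V ∧ IsSimplex K m 𝒳) ∨
      (ringChar K = 3 ∧ Harmonic K 𝒳) := by
  classical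
  by_cases hI : IndepLines K 𝒳
  · exact Or.inl hI
  right
  haveI := hfin.fintype
  have hgen : ∀ P ∈ 𝒳, ∃ v : V, v ≠ 0 ∧ P = span K {v} := fun P hP => line_gen P (hline P hP)
  set w : Submodule K V → V :=
    fun P => if h : ∃ v : V, v ≠ 0 ∧ P = span K {v} then h.choose else 0 with hw_def
  have hw : ∀ P ∈ 𝒳, w P ≠ 0 ∧ P = span K {w P} := by
    intro P hP
    have h := hgen P hP
    simp only [hw_def, dif_pos h]
    exact ⟨h.choose_spec.1, h.choose_spec.2⟩
  have hwInj : Set.InjOn w 𝒳 := fun P hP Q hQ hPQ => by rw [(hw P hP).2, (hw Q hQ).2, hPQ]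
  -- symmetry: any two subsets of the same size are simultaneously (in)dependent
  have sym : ∀ 𝒴 𝒵 : Set (Submodule K V), 𝒴 ⊆ 𝒳 → 𝒵 ⊆ 𝒳 → 𝒴.ncard = 𝒵.ncard →
      IndepLines K 𝒴 → IndepLines K 𝒵 := by
    intro 𝒴 𝒵 hY hZ hcard hind
    set A : Set ↥𝒳 := {P : ↥𝒳 | ↑P ∈ 𝒴} with hA
    set B : Set ↥𝒳 := {P : ↥𝒳 | ↑P ∈ 𝒵} with hB
    have hAY : Subtype.val '' A = 𝒴 := by
      rw [hA]
      ext P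
      simp only [Set.mem_image, Set.mem_setOf_eq]
      constructor
      · rintro ⟨Q, hQ, rfl⟩; exact hQ
      · intro hP; exact ⟨⟨P, hY hP⟩, hP, rfl⟩
    have hBZ : Subtype.val '' B = 𝒵 := by
      rw [hB]
      ext P
      simp only [Set.mem_image, Set.mem_setOf_eq]
      constructor
      · rintro ⟨Q, hQ, rfl⟩; exact hQ
      · intro hP; exact ⟨⟨P, hZ hP⟩, hP, rfl⟩
    have hABcard : A.ncard = B.ncard := by
      have h1 : (Subtype.val '' A).ncard = A.ncard :=
        Set.ncard_image_of_injective _ Subtype.val_injective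
      have h2 : (Subtype.val '' B).ncard = B.ncard :=
        Set.ncard_image_of_injective _ Subtype.val_injective
      rw [← h1, ← h2, hAY, hBZ, hcard]
    obtain ⟨s, hs⟩ := exists_perm_image A B hABcard
    obtain ⟨u, hu⟩ := hext s
    have himg : (fun P => Submodule.map (u : V →ₗ[K] V) P) '' 𝒴 = 𝒵 := by
      have hsub : (fun P => Submodule.map (u : V →ₗ[K] V) P) '' 𝒴 ⊆ 𝒵 := by
        rintro _ ⟨P, hP, rfl⟩
        have hPX : P ∈ 𝒳 := hY hP
        have := (hs ⟨P, hPX⟩).1 hP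
        show Submodule.map (u : V →ₗ[K] V) P ∈ 𝒵
        exact (hu ⟨P, hPX⟩).symm ▸ this
      refine Set.eq_of_subset_of_ncard_le hsub ?_ (hfin.subset hZ)
      have hinj : Function.Injective (fun P : Submodule K V => Submodule.map (u : V →ₗ[K] V) P) :=
        Submodule.map_injective_of_injective u.injective
      rw [Set.ncard_image_of_injective _ hinj, hcard]
    rw [← himg]
    exact indepLines_map u hind
  -- the minimal size of a dependent subset
  have hDn : ∃ k, ∃ 𝒴 ⊆ 𝒳, 𝒴.ncard = k ∧ ¬ IndepLines K 𝒴 :=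
    ⟨𝒳.ncard, 𝒳, subset_rfl, rfl, hI⟩
  set c := Nat.find hDn with hc_def
  obtain ⟨𝒲, h𝒲X, h𝒲c, h𝒲dep⟩ := Nat.find_spec hDn
  have small_indep : ∀ 𝒴 ⊆ 𝒳, 𝒴.ncard < c → IndepLines K 𝒴 := by
    intro 𝒴 h hlt
    by_contra hd
    exact Nat.find_min hDn hlt ⟨𝒴, h, rfl, hd⟩
  have uniform_dep : ∀ 𝒴 ⊆ 𝒳, 𝒴.ncard = c → ¬ IndepLines K 𝒴 := by
    intro 𝒴 h hcard hind
    exact h𝒲dep (sym 𝒴 𝒲 h h𝒲X (hcard.trans h𝒲c.symm) hind)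
  have hcn : c ≤ 𝒳.ncard := by
    rw [show c = 𝒲.ncard from h𝒲c.symm]
    exact Set.ncard_le_ncard h𝒲X hfin
  have pair_indep : ∀ P ∈ 𝒳, ∀ Q ∈ 𝒳, P ≠ Q → IndepLines K {P, Q} := by
    intro P hP Q hQ hPQ
    have hsub : ({P, Q} : Set (Submodule K V)) ⊆ 𝒳 := by
      intro z hz; rcases hz with rfl | rfl; exacts [hP, hQ]
    have hfi : Function.Injective ![P, Q] := by
      intro i j hij
      fin_cases i <;> fin_cases j <;>
        first
          | rfl
          | (exfalso; exact hPQ (by simpa using hij))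
          | (exfalso; exact hPQ (by simpa using hij.symm))
    have hfr : Set.range ![P, Q] = {P, Q} := by
      ext z
      constructor
      · rintro ⟨i, rfl⟩; fin_cases i <;> simp
      · rintro (rfl | rfl); exacts [⟨0, rfl⟩, ⟨1, rfl⟩]
    rw [indepLines_iff_fn _ w (fun R hR => hw R (hsub hR)) ![P, Q] hfi hfr]
    have : (fun i => w (![P, Q] i)) = ![w P, w Q] := by
      funext i; fin_cases i <;> simp
    rw [this]
    rw [LinearIndependent.pair_iff' (hw P hP).1]
    intro a ha
    have ha0 : a ≠ 0 := by
      rintro rfl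
      exact (hw Q hQ).1 (by simpa using ha.symm)
    apply hPQ
    rw [(hw P hP).2, (hw Q hQ).2, ← ha, span_singleton_smul_eq (isUnit_iff_ne_zero.2 ha0)]
  have hc3 : 3 ≤ c := by
    by_contra hlt
    apply h𝒲dep
    have hWfin := hfin.subset h𝒲X
    have hle : 𝒲.ncard ≤ 2 := by
      rw [h𝒲c, ← hc_def]; omega
    rcases Nat.lt_or_ge 𝒲.ncard 1 with h0 | h1
    · have hW0 : 𝒲 = ∅ := by
        rw [← Set.ncard_eq_zero hWfin]; omega
      subst hW0
      exact ⟨fun P => 0, fun P => absurd P.2 (Set.notMem_empty _), linearIndependent_empty_type⟩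
    rcases Nat.lt_or_ge 𝒲.ncard 2 with h1' | h2'
    · have hW1 : 𝒲.ncard = 1 := by omega
      obtain ⟨P, rfl⟩ := Set.ncard_eq_one.1 hW1
      have hPX : P ∈ 𝒳 := h𝒲X rfl
      have hwP : ∀ R ∈ ({P} : Set (Submodule K V)), w R ≠ 0 ∧ R = span K {w R} := by
        intro R hR
        rw [Set.mem_singleton_iff] at hR
        subst hR
        exact hw _ hPX
      rw [indepLines_iff_fam _ w hwP]
      exact linearIndependent_unique_iff.2 (by simpa using (hw P hPX).1)
    · have hW2 : 𝒲.ncard = 2 := by omega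
      obtain ⟨P, Q, hne, rfl⟩ := Set.ncard_eq_two.1 hW2
      exact pair_indep P (h𝒲X (by simp)) Q (h𝒲X (by simp)) hne
  have hceq : ∀ 𝒴 ⊆ 𝒳, 𝒴.ncard = c → ¬ IndepLines K 𝒴 := uniform_dep
  obtain ⟨m, hmc⟩ : ∃ m, c = m + 1 := ⟨c - 1, by omega⟩
  have hm2 : 2 ≤ m := by omega
  rcases eq_or_lt_of_le hcn with hEq | hlt2
  · -- simplex case
    left
    refine ⟨m, hm2, ?_, hfin, by omega, hline, hI,
      fun 𝒴' h' hc' => small_indep 𝒴' h' (by omega)⟩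
    -- m ≤ finrank K V
    obtain ⟨𝒴, hYsub, hYcard⟩ := Set.exists_subset_card_eq (s := 𝒳) (n := m) (by omega)
    have hYind := small_indep 𝒴 hYsub (by omega)
    have hYfin := hfin.subset hYsub
    haveI := hYfin.fintype
    have hli := (indepLines_iff_fam 𝒴 w (fun P hP => hw P (hYsub hP))).1 hYind
    have hcard : Fintype.card ↥𝒴 = m := by
      rw [← Nat.card_eq_fintype_card, Nat.card_coe_set_eq, hYcard]
    calc m = Fintype.card ↥𝒴 := hcard.symm
      _ ≤ Module.finrank K V := hli.fintype_card_le_finrank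
  · -- harmonic case
    right
    obtain ⟨𝒴, hYsub, hYcard⟩ := Set.exists_subset_card_eq (s := 𝒳) (n := m) (by omega)
    have hYfin := hfin.subset hYsub
    haveI := hYfin.fintype
    have hYc : Fintype.card ↥𝒴 = m := by
      rw [← Nat.card_eq_fintype_card, Nat.card_coe_set_eq, hYcard]
    set L : Fin m → Submodule K V := fun i => ↑((Fintype.equivFinOfCardEq hYc).symm i)
      with hL_def
    have hLmem : ∀ i, L i ∈ 𝒴 := fun i => ((Fintype.equivFinOfCardEq hYc).symm i).2
    have hLinj : Function.Injective L := by
      intro i j h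
      exact (Equiv.injective _) (Subtype.ext h)
    have hLrange : Set.range L = 𝒴 := by
      ext P
      constructor
      · rintro ⟨i, rfl⟩; exact hLmem i
      · intro hP
        exact ⟨(Fintype.equivFinOfCardEq hYc) ⟨P, hP⟩, by simp [hL_def]⟩
    have hLX : ∀ i, L i ∈ 𝒳 := fun i => hYsub (hLmem i)
    set e : Fin m → V := fun i => w (L i) with he_def
    have he_li : LinearIndependent K e :=
      (indepLines_iff_fn 𝒴 w (fun P hP => hw P (hYsub hP)) L hLinj hLrange).1
        (small_indep 𝒴 hYsub (by omega))
    have hdiff : 2 ≤ (𝒳 \ 𝒴).ncard := by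
      rw [Set.ncard_diff hYsub hYfin, hYcard]
      omega
    obtain ⟨p, q, hpm, hqm, hpq⟩ :=
      (Set.one_lt_ncard_iff (s := 𝒳 \ 𝒴) (hfin.subset Set.diff_subset)).1 (by omega)
    obtain ⟨hpX, hpY⟩ := hpm
    obtain ⟨hqX, hqY⟩ := hqm
    have himgY : w '' 𝒴 = Set.range e := by
      rw [← hLrange, ← Set.range_comp]
      rfl
    have coord_rep : ∀ z ∈ 𝒳, z ∉ 𝒴 →
        ∃ cz : Fin m → K, (∀ j, cz j ≠ 0) ∧ w z = ∑ j, cz j • e j := by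
      intro z hzX hzY
      have hwz_notin : w z ∉ Set.range e := by
        rintro ⟨j, hj⟩
        have : L j = z := hwInj (hLX j) hzX hj
        exact hzY (this ▸ hLmem j)
      have hdep : ¬ IndepLines K (insert z 𝒴) := by
        apply uniform_dep _ (Set.insert_subset hzX hYsub)
        rw [Set.ncard_insert_of_notMem hzY hYfin, hYcard]
        omega
      rw [indepLines_iff_set _ w (fun P hP => hw P ((Set.insert_subset hzX hYsub) hP)),
        Set.image_insert_eq, himgY] at hdep
      have hspan : w z ∈ span K (Set.range e) := by
        by_contra hns
        exact hdep ((linearIndepOn_id_insert hwz_notin).2 ⟨he_li.linearIndepOn_id, hns⟩)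
      obtain ⟨cz, hcz⟩ := (mem_span_range_iff_exists_fun K).1 hspan
      refine ⟨cz, fun j => ?_, hcz.symm⟩
      intro hj0
      have hsub2 : insert z (L '' ({j}ᶜ : Set (Fin m))) ⊆ 𝒳 := by
        intro R hR
        rcases hR with rfl | ⟨i, -, rfl⟩
        · exact hzX
        · exact hLX i
      have hznotin : z ∉ L '' ({j}ᶜ : Set (Fin m)) := by
        rintro ⟨i, -, rfl⟩
        exact hzY (hLmem i)
      have hcompl : ({j}ᶜ : Set (Fin m)).ncard = m - 1 := by
        rw [Set.compl_eq_univ_diff, Set.ncard_diff (by simp), Set.ncard_univ]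
        simp
      have hcard2 : (insert z (L '' ({j}ᶜ : Set (Fin m)))).ncard = m := by
        rw [Set.ncard_insert_of_notMem hznotin ((Set.finite_univ.subset (Set.subset_univ _)).image L),
          Set.ncard_image_of_injective _ hLinj, hcompl]
        omega
      have hind2 := small_indep _ hsub2 (by omega)
      rw [indepLines_iff_set _ w (fun P hP => hw P (hsub2 hP)), Set.image_insert_eq,
        Set.image_image] at hind2
      have hznotin2 : w z ∉ (fun i => w (L i)) '' ({j}ᶜ : Set (Fin m)) := by
        rintro ⟨i, -, hi⟩
        exact hwz_notin ⟨i, hi⟩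
      have hnospan := ((linearIndepOn_id_insert hznotin2).1 hind2).2
      apply hnospan
      rw [← hcz]
      apply Submodule.sum_mem
      intro i _
      by_cases hij : i = j
      · subst hij
        rw [hj0, zero_smul]
        exact Submodule.zero_mem _
      · exact Submodule.smul_mem _ _ (subset_span ⟨i, hij, rfl⟩)
    obtain ⟨a, ha0, hap⟩ := coord_rep p hpX hpY
    have master : ∀ i : Fin m, ∀ z, z ∈ 𝒳 → z ∉ 𝒴 → z ≠ p →
        ∀ cz : Fin m → K, (∀ j, cz j ≠ 0) → w z = ∑ j, cz j • e j →
        ∀ k, k ≠ i → cz i * a k = 2 * (a i * cz k) := by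
      intro i z hzX hzY hzp cz hcz0 hcz
      set σ : Equiv.Perm ↥𝒳 := Equiv.swap ⟨L i, hLX i⟩ ⟨p, hpX⟩ with hσ
      obtain ⟨u, hu⟩ := hext σ
      have hscal : ∀ P Q : Submodule K V, P ∈ 𝒳 → Q ∈ 𝒳 →
          Submodule.map (u : V →ₗ[K] V) P = Q → ∃ γ : K, γ ≠ 0 ∧ u (w P) = γ • w Q := by
        intro P Q hP hQ hmap
        have hspanmap : Submodule.map (u : V →ₗ[K] V) (span K {w P}) = span K {u (w P)} := by
          rw [Submodule.map_span, Set.image_singleton]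
          rfl
        have h1 : span K {u (w P)} = span K {w Q} := by
          rw [← hspanmap, ← (hw P hP).2, hmap]
          exact (hw Q hQ).2
        exact span_eq_scalar h1
      have hui : ∃ α : K, α ≠ 0 ∧ u (e i) = α • w p := by
        apply hscal (L i) p (hLX i) hpX
        have := hu ⟨L i, hLX i⟩
        rwa [hσ, Equiv.swap_apply_left] at this
      have huk : ∀ k, k ≠ i → ∃ lk : K, lk ≠ 0 ∧ u (e k) = lk • e k := by
        intro k hk
        apply hscal (L k) (L k) (hLX k) (hLX k)
        have hne1 : (⟨L k, hLX k⟩ : ↥𝒳) ≠ ⟨L i, hLX i⟩ := by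
          intro h
          exact hk (hLinj (Subtype.mk_eq_mk.1 h))
        have hne2 : (⟨L k, hLX k⟩ : ↥𝒳) ≠ ⟨p, hpX⟩ := by
          intro h
          exact hpY (by rw [← Subtype.mk_eq_mk.1 h]; exact hLmem k)
        have := hu ⟨L k, hLX k⟩
        rwa [hσ, Equiv.swap_apply_of_ne_of_ne hne1 hne2] at this
      have hup : ∃ ν : K, ν ≠ 0 ∧ u (w p) = ν • e i := by
        apply hscal p (L i) hpX (hLX i)
        have := hu ⟨p, hpX⟩
        rwa [hσ, Equiv.swap_apply_right] at this
      have huz : ∃ ρ : K, ρ ≠ 0 ∧ u (w z) = ρ • w z := by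
        apply hscal z z hzX hzX
        have hne1 : (⟨z, hzX⟩ : ↥𝒳) ≠ ⟨L i, hLX i⟩ := by
          intro h
          exact hzY (by rw [Subtype.mk_eq_mk.1 h]; exact hLmem i)
        have hne2 : (⟨z, hzX⟩ : ↥𝒳) ≠ ⟨p, hpX⟩ := by
          intro h
          exact hzp (Subtype.mk_eq_mk.1 h)
        have := hu ⟨z, hzX⟩
        rwa [hσ, Equiv.swap_apply_of_ne_of_ne hne1 hne2] at this
      have hμex : ∀ j : Fin m, ∃ mj : K, mj ≠ 0 ∧
          u (e j) = mj • (if j = i then w p else e j) := by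
        intro j
        by_cases hj : j = i
        · subst hj
          obtain ⟨α, hα0, hα⟩ := hui
          exact ⟨α, hα0, by simp [hα]⟩
        · obtain ⟨lk, h1, h2⟩ := huk j hj
          exact ⟨lk, h1, by simp [hj, h2]⟩
      choose μ hμ0 hμe using hμex
      obtain ⟨ν, hν0, hν⟩ := hup
      obtain ⟨ρ, hρ0, hρ⟩ := huz
      -- coordinate expansion of `u (w p)` and `u (w z)`
      have hcoord : ∀ (d : Fin m → K),
          u (∑ j, d j • e j) = ∑ k, ((d i * μ i * a k) + (if k = i then 0 else d k * μ k)) • e k := by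
        intro d
        have h1 : u (∑ j, d j • e j) = ∑ j, d j • (μ j • (if j = i then w p else e j)) := by
          rw [map_sum]
          exact Finset.sum_congr rfl fun j _ => by rw [map_smul, hμe j]
        rw [h1]
        have h2 : (fun j => d j • (μ j • (if j = i then w p else e j)))
            = fun j => (if j = i then d i • (μ i • w p) else 0)
              + (if j = i then 0 else (d j * μ j) • e j) := by
          funext j
          by_cases hj : j = i
          · subst hj; simp [smul_smul]
          · simp [hj, smul_smul]
        rw [h2, Finset.sum_add_distrib]
        have h3 : ∑ j, (if j = i then d i • (μ i • w p) else (0:V)) = d i • (μ i • w p) := by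
          simp [Finset.sum_ite_eq']
        have h4 : d i • (μ i • w p) = ∑ k, (d i * μ i * a k) • e k := by
          rw [hap, Finset.smul_sum, Finset.smul_sum]
          exact Finset.sum_congr rfl fun k _ => by rw [smul_smul, smul_smul]
        have h5 : ∑ j, (if j = i then (0:V) else (d j * μ j) • e j)
            = ∑ k, (if k = i then (0:K) else d k * μ k) • e k := by
          exact Finset.sum_congr rfl fun k _ => by by_cases hk : k = i <;> simp [hk]
        rw [h3, h4, h5]
        rw [← Finset.sum_add_distrib]
        exact Finset.sum_congr rfl fun k _ => by rw [add_smul]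
      -- equation from `u (w p) = ν • e i`
      have hBp : u (w p) = ∑ k, (if k = i then ν else (0:K)) • e k := by
        rw [hν]
        simp [ite_smul, Finset.sum_ite_eq']
      have hAp : u (w p) = ∑ k, ((a i * μ i * a k) + (if k = i then 0 else a k * μ k)) • e k := by
        rw [hap]
        exact hcoord a
      have keyp := coords_eq he_li _ _ (hAp.symm.trans hBp)
      have key1 : ∀ k, k ≠ i → μ k = -(a i * μ i) := by
        intro k hk
        have hthis := congrFun keyp k
        simp only [hk, if_neg, ite_false] at hthis
        have h6 : a k * (μ k + a i * μ i) = 0 := by linear_combination hthis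
        rcases mul_eq_zero.1 h6 with h | h
        · exact absurd h (ha0 k)
        · exact eq_neg_of_add_eq_zero_left h
      -- now the equation for `z`
      have hAz : u (w z) = ∑ k, ((cz i * μ i * a k) + (if k = i then 0 else cz k * μ k)) • e k := by
        rw [hcz]
        exact hcoord cz
      have hBz : u (w z) = ∑ k, (ρ * cz k) • e k := by
        rw [hρ, hcz, Finset.smul_sum]
        exact Finset.sum_congr rfl fun k _ => by rw [smul_smul]
      have keyz := coords_eq he_li _ _ (hAz.symm.trans hBz)
      have hρval : ρ = μ i * a i := by
        have h := congrFun keyz i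
        simp only [if_pos rfl, ite_true, add_zero] at h
        have h8 : cz i * (μ i * a i - ρ) = 0 := by linear_combination h
        rcases mul_eq_zero.1 h8 with h' | h'
        · exact absurd h' (hcz0 i)
        · exact (sub_eq_zero.1 h').symm
      intro k hk
      have h := congrFun keyz k
      simp only [hk, ite_false, if_neg] at h
      rw [key1 k hk, hρval] at h
      have h7 : μ i * (cz i * a k) = μ i * (2 * (a i * cz k)) := by linear_combination h
      exact mul_left_cancel₀ (hμ0 i) h7
    -- apply the master relation
    obtain ⟨b, hb0, hbq⟩ := coord_rep q hqX hqY
    have hqp : q ≠ p := hpq.symm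
    set i0 : Fin m := ⟨0, by omega⟩ with hi0
    set i1 : Fin m := ⟨1, by omega⟩ with hi1
    have hne01 : i1 ≠ i0 := by
      intro h
      have := congrArg Fin.val h
      simp [hi0, hi1] at this
    have r1 := master i0 q hqX hqY hqp b hb0 hbq i1 hne01
    have r2 := master i1 q hqX hqY hqp b hb0 hbq i0 (Ne.symm hne01)
    have h3 : (3:K) = 0 := by
      have hmul : (b i0 * a i1) * (b i1 * a i0)
          = 2 * (a i0 * b i1) * (2 * (a i1 * b i0)) := by rw [r1, r2]
      have h9 : (3:K) * ((a i0 * b i1) * (a i1 * b i0)) = 0 := by linear_combination -hmul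
      rcases mul_eq_zero.1 h9 with h | h
      · exact h
      · rcases mul_eq_zero.1 h with h' | h' <;>
          rcases mul_eq_zero.1 h' with h'' | h''
        · exact absurd h'' (ha0 i0)
        · exact absurd h'' (hb0 i1)
        · exact absurd h'' (ha0 i1)
        · exact absurd h'' (hb0 i0)
    have h2ne : (2:K) ≠ 0 := by
      intro h2z
      have h1z : (1:K) = 0 := by linear_combination h3 - h2z
      exact one_ne_zero h1z
    have hm2' : m = 2 := by
      by_contra hm3
      have hm3' : 3 ≤ m := by omega
      have hne20 : (⟨2, by omega⟩ : Fin m) ≠ i0 := by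
        intro h; have := congrArg Fin.val h; simp [hi0] at this
      have hne21 : (⟨2, by omega⟩ : Fin m) ≠ i1 := by
        intro h; have := congrArg Fin.val h; simp [hi1] at this
      have r3 := master i0 q hqX hqY hqp b hb0 hbq ⟨2, by omega⟩ hne20
      have r4 := master i1 q hqX hqY hqp b hb0 hbq ⟨2, by omega⟩ hne21
      have hzero : (2:K) * (a i0 * (a i1 * b ⟨2, by omega⟩)) = 0 := by
        linear_combination (a i1) * r3 - (a ⟨2, by omega⟩) * r1 - 2 * (a i0) * r4
      rcases mul_eq_zero.1 hzero with h | h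
      · exact h2ne h
      · rcases mul_eq_zero.1 h with h' | h'
        · exact absurd h' (ha0 i0)
        · rcases mul_eq_zero.1 h' with h'' | h''
          · exact absurd h'' (ha0 i1)
          · exact absurd h'' (hb0 _)
    subst hm2'
    have hsum2 : ∀ (M : Type _) [AddCommMonoid M] [Module K M] (d : Fin 2 → K) (v : Fin 2 → M),
        ∑ j, d j • v j = d i0 • v i0 + d i1 • v i1 := by
      intro M _ _ d v
      rw [Fin.sum_univ_two]
      rfl
    -- no further points: 𝒳 = 𝒴 ∪ {p, q}
    have hsub4 : 𝒳 ⊆ 𝒴 ∪ {p, q} := by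
      intro r hrX
      by_contra hr
      simp only [Set.mem_union, Set.mem_insert_iff, Set.mem_singleton_iff, not_or] at hr
      obtain ⟨hrY, hrp, hrq⟩ := hr
      obtain ⟨cr, hcr0, hcr⟩ := coord_rep r hrX hrY
      have s1 := master i0 r hrX hrY hrp cr hcr0 hcr i1 hne01
      have hprop : cr i1 * b i0 = cr i0 * b i1 := by
        have hc : (2 * a i0) * (cr i1 * b i0) = (2 * a i0) * (cr i0 * b i1) := by
          linear_combination (cr i0) * r1 - (b i0) * s1
        exact mul_left_cancel₀ (mul_ne_zero h2ne (ha0 i0)) hc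
      have ht0 : cr i0 * (b i0)⁻¹ ≠ 0 := mul_ne_zero (hcr0 i0) (inv_ne_zero (hb0 i0))
      have hwr : w r = (cr i0 * (b i0)⁻¹) • w q := by
        rw [hcr, hbq, hsum2, hsum2, smul_add, smul_smul, smul_smul]
        congr 1
        · congr 1
          rw [mul_assoc, inv_mul_cancel₀ (hb0 i0), mul_one]
        · congr 1
          have hb := hb0 i0
          field_simp
          linear_combination hprop
      have : r = q := by
        rw [(hw r hrX).2, (hw q hqX).2, hwr,
          span_singleton_smul_eq (isUnit_iff_ne_zero.2 ht0)]
      exact hrq this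
    have hXeq : 𝒳 = 𝒴 ∪ {p, q} := by
      refine Set.Subset.antisymm hsub4 (Set.union_subset hYsub ?_)
      intro r hr
      rcases hr with rfl | hr
      · exact hpX
      · rw [Set.mem_singleton_iff] at hr
        subst hr
        exact hqX
    have hY2 : 𝒴 = {L i0, L i1} := by
      rw [← hLrange]
      ext P
      constructor
      · rintro ⟨j, rfl⟩
        have : j = i0 ∨ j = i1 := by
          have hj2 : (j : ℕ) < 2 := j.2
          by_cases h0 : (j : ℕ) = 0
          · left
            apply Fin.ext
            rw [hi0]
            exact h0
          · right
            apply Fin.ext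
            rw [hi1]
            show (j : ℕ) = 1
            omega
        rcases this with rfl | rfl
        · exact Set.mem_insert _ _
        · exact Set.mem_insert_of_mem _ rfl
      · rintro (rfl | hP)
        · exact ⟨i0, rfl⟩
        · rw [Set.mem_singleton_iff] at hP
          subst hP
          exact ⟨i1, rfl⟩
    -- characteristic
    have hchar : ringChar K = 3 := by
      haveI := ringChar.charP K
      have hd : ringChar K ∣ 3 := ringChar.dvd (by exact_mod_cast h3)
      rcases (Nat.Prime.eq_one_or_self_of_dvd Nat.prime_three _ hd) with h | h
      · exact absurd h (CharP.char_ne_one K (ringChar K))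
      · exact h
    refine ⟨hchar, a i0 • e i0, a i1 • e i1, ?_, ?_⟩
    · -- linear independence of the pair
      rw [LinearIndependent.pair_iff]
      intro s t hst
      have hg := Fintype.linearIndependent_iff.1 he_li
        (fun j => if j = i0 then s * a i0 else t * a i1) ?_
      · constructor
        · have := hg i0
          simp only [if_pos rfl, ite_true] at this
          rcases mul_eq_zero.1 this with h' | h'
          · exact h'
          · exact absurd h' (ha0 i0)
        · have := hg i1
          simp only [hne01, ite_false, if_neg] at this
          rcases mul_eq_zero.1 this with h' | h'
          · exact h'
          · exact absurd h' (ha0 i1)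
      · rw [hsum2]
        simp only [if_pos rfl, hne01, ite_true, ite_false, if_neg]
        rw [← smul_smul, ← smul_smul]
        exact hst
    · -- the set identification
      have hsx : span K {a i0 • e i0} = L i0 := by
        rw [span_singleton_smul_eq (isUnit_iff_ne_zero.2 (ha0 i0))]
        exact ((hw (L i0) (hLX i0)).2).symm
      have hsy : span K {a i1 • e i1} = L i1 := by
        rw [span_singleton_smul_eq (isUnit_iff_ne_zero.2 (ha0 i1))]
        exact ((hw (L i1) (hLX i1)).2).symm
      have hsp : span K {a i0 • e i0 + a i1 • e i1} = p := by
        rw [show a i0 • e i0 + a i1 • e i1 = w p from by rw [hap, hsum2]]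
        exact ((hw p hpX).2).symm
      have hsq : span K {a i0 • e i0 - a i1 • e i1} = q := by
        have hb1eq : b i1 = -((b i0 * (a i0)⁻¹) * a i1) := by
          have ha := ha0 i0
          field_simp
          linear_combination r1 + (a i0 * b i1) * h3
        have hb0eq : b i0 = (b i0 * (a i0)⁻¹) * a i0 := by
          rw [mul_assoc, inv_mul_cancel₀ (ha0 i0), mul_one]
        have hwq : w q = (b i0 * (a i0)⁻¹) • (a i0 • e i0 - a i1 • e i1) := by
          rw [hbq, hsum2]
          rw [smul_sub, smul_smul, smul_smul]
          rw [show b i0 • e i0 = ((b i0 * (a i0)⁻¹) * a i0) • e i0 from by rw [← hb0eq]]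
          rw [show b i1 • e i1 = (-((b i0 * (a i0)⁻¹) * a i1)) • e i1 from by rw [← hb1eq]]
          rw [neg_smul, ← sub_eq_add_neg]
        have ht0 : b i0 * (a i0)⁻¹ ≠ 0 := mul_ne_zero (hb0 i0) (inv_ne_zero (ha0 i0))
        rw [(hw q hqX).2, hwq, span_singleton_smul_eq (isUnit_iff_ne_zero.2 ht0)]
      rw [hXeq, hY2, ← hsx, ← hsy, ← hsp, ← hsq]
      ext R
      simp only [Set.mem_union, Set.mem_insert_iff, Set.mem_singleton_iff, or_assoc]
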